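/- arXiv:1104.0971 — 2 statements merged into one kernel-verified Lean document; each statement's English description precedes it below -/
import Mathlib

section
/- Let n ≥ 1 and λ_1, …, λ_n be real numbers with λ_i ≥ -C for all i, where C ≥ 0. Set H = Σ_i λ_i and |A|² = Σ_i λ_i². Then |A|² ≤ (2n+1)H² + (2n³ - n + 1)C². -/
theorem stmt_0 (n : ℕ) (hn : 1 ≤ n) (C : ℝ) (hC : 0 ≤ C)
    (lam : Fin n → ℝ) (h : ∀ i, -C ≤ lam i) :
    (∑ i, lam i ^ 2) ≤
      (2 * (n : ℝ) + 1) * (∑ i, lam i) ^ 2 + (2 * (n : ℝ) ^ 3 - n + 1) * C ^ 2 := by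
  have key : ∑ i, (lam i + C) ^ 2 ≤ (∑ i, (lam i + C)) ^ 2 :=
    Finset.sum_sq_le_sq_sum_of_nonneg (fun i _ => by linarith [h i])
  have e1 : ∑ i, (lam i + C) ^ 2 = (∑ i, lam i ^ 2) + 2 * C * (∑ i, lam i) + n * C ^ 2 := by
    simp [add_sq, Finset.sum_add_distrib, Finset.mul_sum, Finset.sum_mul]
    exact Finset.sum_congr rfl fun i _ => by ring
  have e2 : (∑ i, (lam i + C)) = (∑ i, lam i) + n * C := by
    simp [Finset.sum_add_distrib]
  rw [e1, e2] at key
  have hn' : (1 : ℝ) ≤ n := by exact_mod_cast hn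
  set S := ∑ i, lam i with hS
  set Q := ∑ i, lam i ^ 2 with hQ
  have k2 : Q ≤ S^2 + 2*((n:ℝ)-1)*C*S + ((n:ℝ)^2-(n:ℝ))*C^2 := by nlinarith [key]
  have h3 : 0 ≤ (S - ((n:ℝ)-1)*C)^2 := sq_nonneg _
  have k3 : Q ≤ 2*S^2 + (2*(n:ℝ)^2-3*(n:ℝ)+1)*C^2 := by nlinarith [k2, h3]
  have h1 : 0 ≤ (2*(n:ℝ)-1) * S^2 := mul_nonneg (by linarith) (sq_nonneg S)
  have h2 : 0 ≤ (2*(n:ℝ)^3 - 2*(n:ℝ)^2 + 2*(n:ℝ)) * C^2 :=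
    mul_nonneg (by nlinarith) (sq_nonneg C)
  linarith [k3, h1, h2]
end

section
/- Let μ > 1 and let L: ℕ → ℝ_{>0}, B, C > 0 satisfy L(k+1) ≤ C^{1/q_{k+1}} B^{1/q_k} μ^{k/q_k} L(k) for all k, where q_k = q₀ μ^k with q₀ > 0. Then limsup_k L(k) ≤ C^{S₁} B^{S₀} μ^{S} L(0), where S₀ = Σ_{k≥0} 1/q_k = μ/(q₀(μ-1)), S₁ = S₀/μ, and S = Σ_{k≥0} k/q_k = μ/(q₀(μ-1)²). -/
open Filter Finset Real Topology

theorem stmt_16 (μ q₀ B C : ℝ) (hμ : 1 < μ) (hq₀ : 0 < q₀)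
    (hB : 0 < B) (hC : 0 < C) (L : ℕ → ℝ) (hL : ∀ k, 0 < L k)
    (hrec : ∀ k : ℕ, L (k + 1) ≤
      C ^ (1 / (q₀ * μ ^ (k + 1))) * B ^ (1 / (q₀ * μ ^ k)) *
        μ ^ ((k : ℝ) / (q₀ * μ ^ k)) * L k) :
    Filter.limsup L Filter.atTop ≤
      C ^ (μ / (q₀ * (μ - 1)) / μ) * B ^ (μ / (q₀ * (μ - 1))) *
        μ ^ (μ / (q₀ * (μ - 1) ^ 2)) * L 0 := by
  have hμ0 : (0:ℝ) < μ := lt_trans one_pos hμ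
  have hμ1 : μ - 1 ≠ 0 := sub_ne_zero.2 (ne_of_gt hμ)
  have hr0 : (0:ℝ) ≤ μ⁻¹ := by positivity
  have hr1 : μ⁻¹ < 1 := inv_lt_one_of_one_lt₀ hμ
  set a : ℕ → ℝ := fun n => ∑ j ∈ Finset.range n, 1 / (q₀ * μ ^ (j + 1)) with ha
  set b : ℕ → ℝ := fun n => ∑ j ∈ Finset.range n, 1 / (q₀ * μ ^ j) with hb
  set c : ℕ → ℝ := fun n => ∑ j ∈ Finset.range n, (j : ℝ) / (q₀ * μ ^ j) with hc
  -- the inductive bound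
  have key : ∀ n, L n ≤ C ^ a n * B ^ b n * μ ^ c n * L 0 := by
    intro n
    induction n with
    | zero => simp [ha, hb, hc]
    | succ n ih =>
      have hx : 0 < C ^ (1 / (q₀ * μ ^ (n + 1))) * B ^ (1 / (q₀ * μ ^ n)) *
          μ ^ ((n : ℝ) / (q₀ * μ ^ n)) := by positivity
      calc L (n + 1) ≤ C ^ (1 / (q₀ * μ ^ (n + 1))) * B ^ (1 / (q₀ * μ ^ n)) *
            μ ^ ((n : ℝ) / (q₀ * μ ^ n)) * L n := hrec n
        _ ≤ C ^ (1 / (q₀ * μ ^ (n + 1))) * B ^ (1 / (q₀ * μ ^ n)) *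
            μ ^ ((n : ℝ) / (q₀ * μ ^ n)) * (C ^ a n * B ^ b n * μ ^ c n * L 0) :=
          mul_le_mul_of_nonneg_left ih hx.le
        _ = C ^ a (n + 1) * B ^ b (n + 1) * μ ^ c (n + 1) * L 0 := by
          simp only [ha, hb, hc, Finset.sum_range_succ, Real.rpow_add hC,
            Real.rpow_add hB, Real.rpow_add hμ0]
          ring
  -- limits of the exponent sequences
  have hsg := hasSum_geometric_of_lt_one hr0 hr1
  have hSa : HasSum (fun j : ℕ => 1 / (q₀ * μ ^ (j + 1))) (μ / (q₀ * (μ - 1)) / μ) := by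
    have h := hsg.mul_left ((q₀ * μ)⁻¹)
    have he : (fun j : ℕ => (q₀ * μ)⁻¹ * (μ⁻¹) ^ j) = fun j : ℕ => 1 / (q₀ * μ ^ (j + 1)) := by
      funext j
      rw [inv_pow]
      field_simp
      ring
    have hinv : (1 - μ⁻¹) = (μ - 1) / μ := by field_simp
    have hv : (q₀ * μ)⁻¹ * (1 - μ⁻¹)⁻¹ = μ / (q₀ * (μ - 1)) / μ := by
      rw [hinv]
      field_simp
    rwa [he, hv] at h
  have hSb : HasSum (fun j : ℕ => 1 / (q₀ * μ ^ j)) (μ / (q₀ * (μ - 1))) := by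
    have h := hsg.mul_left (q₀⁻¹)
    have he : (fun j : ℕ => q₀⁻¹ * (μ⁻¹) ^ j) = fun j : ℕ => 1 / (q₀ * μ ^ j) := by
      funext j
      rw [inv_pow]
      field_simp
    have hinv : (1 - μ⁻¹) = (μ - 1) / μ := by field_simp
    have hv : q₀⁻¹ * (1 - μ⁻¹)⁻¹ = μ / (q₀ * (μ - 1)) := by
      rw [hinv]
      field_simp
    rwa [he, hv] at h
  have hSc : HasSum (fun j : ℕ => (j : ℝ) / (q₀ * μ ^ j)) (μ / (q₀ * (μ - 1) ^ 2)) := by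
    have hn : ‖μ⁻¹‖ < 1 := by
      rw [Real.norm_eq_abs, abs_of_nonneg hr0]; exact hr1
    have h := (hasSum_coe_mul_geometric_of_norm_lt_one hn).mul_left (q₀⁻¹)
    have he : (fun j : ℕ => q₀⁻¹ * ((j : ℝ) * (μ⁻¹) ^ j)) =
        fun j : ℕ => (j : ℝ) / (q₀ * μ ^ j) := by
      funext j
      rw [inv_pow]
      field_simp
    have hinv : (1 - μ⁻¹) = (μ - 1) / μ := by field_simp
    have hv : q₀⁻¹ * (μ⁻¹ / (1 - μ⁻¹) ^ 2) = μ / (q₀ * (μ - 1) ^ 2) := by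
      rw [hinv]
      field_simp
    rwa [he, hv] at h
  have ta : Tendsto a atTop (𝓝 (μ / (q₀ * (μ - 1)) / μ)) := hSa.tendsto_sum_nat
  have tb : Tendsto b atTop (𝓝 (μ / (q₀ * (μ - 1)))) := hSb.tendsto_sum_nat
  have tc : Tendsto c atTop (𝓝 (μ / (q₀ * (μ - 1) ^ 2))) := hSc.tendsto_sum_nat
  have hT : Tendsto (fun n => C ^ a n * B ^ b n * μ ^ c n * L 0) atTop
      (𝓝 (C ^ (μ / (q₀ * (μ - 1)) / μ) * B ^ (μ / (q₀ * (μ - 1))) *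
        μ ^ (μ / (q₀ * (μ - 1) ^ 2)) * L 0)) := by
    exact (((tendsto_const_nhds.rpow ta (Or.inl hC.ne')).mul
      (tendsto_const_nhds.rpow tb (Or.inl hB.ne'))).mul
      (tendsto_const_nhds.rpow tc (Or.inl hμ0.ne'))).mul_const (L 0)
  have hle : limsup L atTop ≤ limsup (fun n => C ^ a n * B ^ b n * μ ^ c n * L 0) atTop := by
    refine Filter.limsup_le_limsup (Eventually.of_forall key) ?_ ?_
    · exact Filter.IsBoundedUnder.isCoboundedUnder_le
        (Filter.isBoundedUnder_of ⟨0, fun n => (hL n).le⟩)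
    · exact hT.isBoundedUnder_le
  rwa [hT.limsup_eq] at hle
end
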